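/- Let m ≥ 2 and let M be the position consisting of one element equal to 2 together with 2m−1 elements equal to 1 (so wt(M) = 2m+1). If m is odd then SW_1(M) = 2 + B(m−1) + P(m−1), and if m is even then SW_1(M) = 2 + B(m−1) − P(m); equivalently, the 2-adic valuation of δ_1(M) is 1 + B(m−1) + P(m−1) when m is odd, and 1 + B(m−1) − P(m) when m is even. -/

import Mathlib

open Finset

/-- The weight of a subposition `S` of the position `w : I → ℕ`. -/
def wtS {I : Type*} [Fintype I] [DecidableEq I] (w : I → ℕ) (S : Finset I) : ℕ :=
  ∑ i ∈ S, w i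

/-- The Saks–Werman statistic `δ_e(w) = ∑_{S ⊆ I, ε(S) ≥ e} (-1)^{wt S}` where
`ε(S) = wt(I \ S) - wt(S)`. -/
def delta {I : Type*} [Fintype I] [DecidableEq I] (w : I → ℕ) (e : ℕ) : ℤ :=
  ∑ S ∈ Finset.univ.filter
      (fun S : Finset I => (e : ℤ) ≤ (wtS w Sᶜ : ℤ) - (wtS w S : ℤ)),
    (-1) ^ (wtS w S)

/-- The iterated statistic `δ_e^(b)`: `δ_e^(1) = δ_e` and for `b ≥ 2`,
`δ_e^(b) = ∑_{t ≥ 0} δ_{e+2t}^(b-1)`, a finite sum since `δ_d = 0` for `d > wt(I)`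
(so summing `t` over `0, …, wt(I)` suffices).  (The value at `b = 0` is junk.) -/
def deltaIt {I : Type*} [Fintype I] [DecidableEq I] (w : I → ℕ) : ℕ → ℕ → ℤ
  | 0, e => delta w e
  | 1, e => delta w e
  | (b+2), e => ∑ t ∈ Finset.range ((∑ i, w i) + 1), deltaIt w (b+1) (e + 2*t)

/-- `B m` is the number of ones in the binary expansion of `m`. -/
def binaryWeight (m : ℕ) : ℕ := (Nat.digits 2 m).count 1


/-- digit sum base 2 -/
private def s2 (n : ℕ) : ℕ := (Nat.digits 2 n).sum

private lemma s2_two_mul {k : ℕ} (hk : k ≠ 0) : s2 (2 * k) = s2 k := by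
  unfold s2
  rw [Nat.digits_def' (by norm_num : 1 < 2) (by omega : 0 < 2 * k)]
  simp [Nat.mul_div_cancel_left, Nat.mul_mod_right]

private lemma s2_odd (k : ℕ) : s2 (2 * k + 1) = s2 k + 1 := by
  unfold s2
  rw [Nat.digits_def' (by norm_num : 1 < 2) (by omega : 0 < 2 * k + 1)]
  have h1 : (2 * k + 1) % 2 = 1 := by omega
  have h2 : (2 * k + 1) / 2 = k := by omega
  rw [h1, h2]
  simp [Nat.add_comm]

private lemma s2_key : ∀ n : ℕ, 0 < n → s2 (n - 1) + 1 = s2 n + padicValNat 2 n := by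
  intro n
  induction n using Nat.strong_induction_on with
  | _ n ih =>
    intro hn
    rcases Nat.even_or_odd n with he | ho
    · obtain ⟨k, hk⟩ := he
      have hk' : n = 2 * k := by omega
      subst hk'
      have hkpos : 0 < k := by omega
      have hv : padicValNat 2 (2 * k) = 1 + padicValNat 2 k := by
        rw [padicValNat.mul (by norm_num) (by omega), padicValNat.self (by norm_num)]
      rcases Nat.eq_or_lt_of_le hkpos with h1 | h1
      · subst h1
        rw [hv, padicValNat.one]
        simp [s2]
      · have ihk := ih k (by omega) (by omega)
        have h2 : 2 * k - 1 = 2 * (k - 1) + 1 := by omega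
        rw [h2, s2_odd, s2_two_mul (by omega), hv]
        omega
    · obtain ⟨k, hk⟩ := ho
      subst hk
      have hv : padicValNat 2 (2 * k + 1) = 0 :=
        padicValNat.eq_zero_of_not_dvd (by omega)
      rw [hv, s2_odd]
      rcases Nat.eq_zero_or_pos k with h | h
      · simp [h, s2]
      · have h2 : 2 * k + 1 - 1 = 2 * k := by omega
        rw [h2, s2_two_mul (by omega)]

private lemma s2_pos : ∀ n : ℕ, 0 < n → 0 < s2 n := by
  intro n
  induction n using Nat.strong_induction_on with
  | _ n ih =>
    intro hn
    rcases Nat.even_or_odd n with he | ho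
    · obtain ⟨k, hk⟩ := he
      have hk' : n = 2 * k := by omega
      subst hk'
      rw [s2_two_mul (by omega)]
      exact ih k (by omega) (by omega)
    · obtain ⟨k, hk⟩ := ho
      subst hk
      rw [s2_odd]; omega

private lemma count_eq_sum : ∀ l : List ℕ, (∀ x ∈ l, x < 2) → l.count 1 = l.sum := by
  intro l
  induction l with
  | nil => simp
  | cons a t iht =>
    intro h
    have ha : a < 2 := h a (by simp)
    have ht := iht (fun x hx => h x (by simp [hx]))
    interval_cases a <;> simp [List.count_cons, ht] <;> omega

private lemma binaryWeight_eq_s2 (n : ℕ) : (Nat.digits 2 n).count 1 = s2 n :=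
  count_eq_sum _ (fun _ hx => Nat.digits_lt_base (by norm_num) hx)

/-- partial alternating sum of binomials -/
private lemma alt_sum (n : ℕ) : ∀ J : ℕ,
    ∑ j ∈ range (J + 1), (-1 : ℤ) ^ j * ((n + 1).choose j : ℤ) = (-1) ^ J * (n.choose J : ℤ) := by
  intro J
  induction J with
  | zero => simp
  | succ J ihJ =>
    rw [Finset.sum_range_succ, ihJ,
      show (n + 1).choose (J + 1) = n.choose J + n.choose (J + 1) from Nat.choose_succ_succ n J]
    push_cast
    rw [pow_succ]
    ring

private lemma delta_eq_aux (m : ℕ) (hm : 2 ≤ m)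
    (w : Fin (2 * m) → ℕ) (hw : ∀ x : Fin (2 * m), w x = if (x : ℕ) = 0 then 2 else 1) :
    delta w 1 = (-1) ^ m * (2 * ((2 * m - 2).choose m : ℤ)) := by
  have hm0 : 0 < 2 * m := by omega
  set z : Fin (2 * m) := ⟨0, hm0⟩ with hz
  have hwz : ∀ i : Fin (2 * m), w i = 1 + (if i = z then 1 else 0) := by
    intro i
    rw [hw i]
    by_cases h : i = z
    · simp [h, hz]
    · have : (i : ℕ) ≠ 0 := fun hc => h (Fin.ext hc)
      simp [h, this]
  have hwt : ∀ S : Finset (Fin (2 * m)), wtS w S = S.card + (if z ∈ S then 1 else 0) := by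
    intro S
    unfold wtS
    calc ∑ i ∈ S, w i = ∑ i ∈ S, (1 + if i = z then 1 else 0) :=
          Finset.sum_congr rfl (fun i _ => hwz i)
      _ = S.card + (if z ∈ S then 1 else 0) := by
          rw [Finset.sum_add_distrib, Finset.sum_const, Finset.sum_ite_eq' S z (fun _ => 1)]
          simp
  have htot : ∀ S : Finset (Fin (2 * m)), wtS w Sᶜ + wtS w S = 2 * m + 1 := by
    intro S
    unfold wtS
    rw [Finset.sum_compl_add_sum]
    have := hwt Finset.univ
    unfold wtS at this
    simpa using this
  have hdelta : delta w 1
      = ∑ S ∈ (Finset.univ : Finset (Fin (2 * m))).powerset,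
          (if wtS w S ≤ m then (-1 : ℤ) ^ (wtS w S) else 0) := by
    unfold delta
    rw [Finset.sum_filter, Finset.powerset_univ]
    refine Finset.sum_congr rfl (fun S _ => ?_)
    have h1 := htot S
    have hiff : (((1 : ℕ) : ℤ) ≤ (wtS w Sᶜ : ℤ) - (wtS w S : ℤ)) ↔ wtS w S ≤ m := by
      push_cast
      omega
    simp only [hiff]
  rw [hdelta]
  have huniv : (Finset.univ : Finset (Fin (2 * m))) = insert z (Finset.univ.erase z) :=
    (Finset.insert_erase (Finset.mem_univ z)).symm
  rw [huniv, Finset.sum_powerset_insert (Finset.notMem_erase z Finset.univ)]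
  have hcard : (Finset.univ.erase z).card = 2 * m - 1 := by
    rw [Finset.card_erase_of_mem (Finset.mem_univ z)]
    simp
  -- first sum
  have h1 : ∀ T ∈ (Finset.univ.erase z).powerset,
      (if wtS w T ≤ m then (-1 : ℤ) ^ (wtS w T) else 0)
        = (if T.card ≤ m then (-1 : ℤ) ^ T.card else 0) := by
    intro T hT
    have hzT : z ∉ T := fun h =>
      (Finset.notMem_erase z Finset.univ) ((Finset.mem_powerset.1 hT) h)
    rw [hwt T, if_neg hzT]
    norm_num
  have h2 : ∀ T ∈ (Finset.univ.erase z).powerset,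
      (if wtS w (insert z T) ≤ m then (-1 : ℤ) ^ (wtS w (insert z T)) else 0)
        = (if T.card + 2 ≤ m then (-1 : ℤ) ^ T.card else 0) := by
    intro T hT
    have hzT : z ∉ T := fun h =>
      (Finset.notMem_erase z Finset.univ) ((Finset.mem_powerset.1 hT) h)
    have : wtS w (insert z T) = T.card + 2 := by
      rw [hwt, if_pos (Finset.mem_insert_self z T), Finset.card_insert_of_notMem hzT]
    rw [this, pow_add]
    norm_num
  rw [Finset.sum_congr rfl h1, Finset.sum_congr rfl h2,
    Finset.sum_powerset_apply_card (fun j => if j ≤ m then (-1 : ℤ) ^ j else 0),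
    Finset.sum_powerset_apply_card (fun j => if j + 2 ≤ m then (-1 : ℤ) ^ j else 0),
    hcard]
  have hrange : 2 * m - 1 + 1 = 2 * m := by omega
  rw [hrange]
  have e1 : ∑ j ∈ Finset.range (2 * m), (2 * m - 1).choose j • (if j ≤ m then (-1 : ℤ) ^ j else 0)
      = (-1) ^ m * ((2 * m - 2).choose m : ℤ) := by
    calc ∑ j ∈ Finset.range (2 * m), (2 * m - 1).choose j • (if j ≤ m then (-1 : ℤ) ^ j else 0)
        = ∑ j ∈ Finset.range (2 * m),
            (if j ≤ m then (-1 : ℤ) ^ j * ((2 * m - 1).choose j : ℤ) else 0) := by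
          refine Finset.sum_congr rfl (fun j _ => ?_)
          by_cases h : j ≤ m <;> simp [h, mul_comm]
      _ = ∑ j ∈ Finset.range (m + 1), (-1 : ℤ) ^ j * ((2 * m - 1).choose j : ℤ) := by
          rw [← Finset.sum_filter]
          refine Finset.sum_congr ?_ (fun _ _ => rfl)
          ext a
          simp only [Finset.mem_filter, Finset.mem_range]
          omega
      _ = (-1) ^ m * ((2 * m - 2).choose m : ℤ) := by
          have := alt_sum (2 * m - 2) m
          rwa [show 2 * m - 2 + 1 = 2 * m - 1 by omega] at this
  have e2 : ∑ j ∈ Finset.range (2 * m),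
        (2 * m - 1).choose j • (if j + 2 ≤ m then (-1 : ℤ) ^ j else 0)
      = (-1) ^ m * ((2 * m - 2).choose m : ℤ) := by
    calc ∑ j ∈ Finset.range (2 * m), (2 * m - 1).choose j • (if j + 2 ≤ m then (-1 : ℤ) ^ j else 0)
        = ∑ j ∈ Finset.range (2 * m),
            (if j + 2 ≤ m then (-1 : ℤ) ^ j * ((2 * m - 1).choose j : ℤ) else 0) := by
          refine Finset.sum_congr rfl (fun j _ => ?_)
          by_cases h : j + 2 ≤ m <;> simp [h, mul_comm]
      _ = ∑ j ∈ Finset.range ((m - 2) + 1), (-1 : ℤ) ^ j * ((2 * m - 1).choose j : ℤ) := by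
          rw [← Finset.sum_filter]
          refine Finset.sum_congr ?_ (fun _ _ => rfl)
          ext a
          simp only [Finset.mem_filter, Finset.mem_range]
          omega
      _ = (-1) ^ (m - 2) * ((2 * m - 2).choose (m - 2) : ℤ) := by
          have := alt_sum (2 * m - 2) (m - 2)
          rwa [show 2 * m - 2 + 1 = 2 * m - 1 by omega] at this
      _ = (-1) ^ m * ((2 * m - 2).choose m : ℤ) := by
          have hs : (2 * m - 2).choose (m - 2) = (2 * m - 2).choose m := by
            have := Nat.choose_symm (n := 2 * m - 2) (k := m - 2) (by omega)
            rw [show 2 * m - 2 - (m - 2) = m by omega] at this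
            exact this.symm
          have hp : (-1 : ℤ) ^ (m - 2) = (-1) ^ m := by
            rw [show m = (m - 2) + 2 by omega, pow_add]
            simp
          rw [hs, hp]
  rw [e1, e2]
  ring


private lemma binaryWeight_eq (n : ℕ) : binaryWeight n = s2 n :=
  binaryWeight_eq_s2 n

theorem emultiplicity_delta_two_ones
    (m : ℕ) (hm : 2 ≤ m)
    (w : Fin (2 * m) → ℕ) (hw : ∀ x : Fin (2 * m), w x = if (x : ℕ) = 0 then 2 else 1) :
    (Odd m →
      emultiplicity (2 : ℤ) (delta w 1)
        = ((1 + binaryWeight (m - 1) + padicValNat 2 (m - 1) : ℕ) : ℕ∞))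
    ∧ (Even m →
      emultiplicity (2 : ℤ) (delta w 1)
        = ((1 + binaryWeight (m - 1) - padicValNat 2 m : ℕ) : ℕ∞)) := by
  set C : ℕ := (2 * m - 2).choose m with hC
  have hCpos : 0 < C := Nat.choose_pos (by omega)
  -- the valuation of C via Kummer
  have hval : padicValNat 2 C = s2 m + s2 (m - 2) - s2 (2 * m - 2) := by
    have := sub_one_mul_padicValNat_choose_eq_sub_sum_digits
      (p := 2) (k := m) (n := 2 * m - 2) (by omega)
    rw [show 2 * m - 2 - m = m - 2 by omega] at this
    simpa [s2] using this
  have h2m2 : s2 (2 * m - 2) = s2 (m - 1) := by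
    rw [show 2 * m - 2 = 2 * (m - 1) by omega, s2_two_mul (by omega)]
  have k1 : s2 (m - 1) + 1 = s2 m + padicValNat 2 m := s2_key m (by omega)
  have k2 : s2 (m - 2) + 1 = s2 (m - 1) + padicValNat 2 (m - 1) := by
    have := s2_key (m - 1) (by omega)
    rwa [show m - 1 - 1 = m - 2 by omega] at this
  have hspos : 0 < s2 m := s2_pos m (by omega)
  -- the emultiplicity of delta
  have hemul : emultiplicity (2 : ℤ) (delta w 1) = ((1 + padicValNat 2 C : ℕ) : ℕ∞) := by
    have habs : emultiplicity (2 : ℤ) (delta w 1) = emultiplicity 2 (2 * C) := by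
      rw [delta_eq_aux m hm w hw]
      have hcast : (2 * (C : ℤ)) = ((2 * C : ℕ) : ℤ) := by push_cast; ring
      rcases Nat.even_or_odd m with he | ho
      · rw [he.neg_one_pow, one_mul, hcast]
        exact_mod_cast Int.natCast_emultiplicity 2 (2 * C)
      · rw [ho.neg_one_pow, neg_one_mul, emultiplicity_neg, hcast]
        exact_mod_cast Int.natCast_emultiplicity 2 (2 * C)
    rw [habs, ← padicValNat_eq_emultiplicity (p := 2) (by omega : 2 * C ≠ 0),
      padicValNat.mul (p := 2) (by norm_num) (by omega),
      padicValNat.self (by norm_num)]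
  constructor
  · intro hodd
    have hv2m : padicValNat 2 m = 0 := padicValNat.eq_zero_of_not_dvd (by
      obtain ⟨k, hk⟩ := hodd
      omega)
    rw [hemul, binaryWeight_eq]
    congr 1
    omega
  · intro heven
    have hv2m1 : padicValNat 2 (m - 1) = 0 := padicValNat.eq_zero_of_not_dvd (by
      obtain ⟨k, hk⟩ := heven
      omega)
    rw [hemul, binaryWeight_eq]
    congr 1
    omega
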